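/- The expected number of linear extensions of a random (d−1)-dimensional partial order on [n] equals n! · Q_d(n), where Q_d(n) is the probability that a random d-dimensional partial order on [n] is an antichain. -/
import Mathlib


open Asymptotics

noncomputable section

/-- `Q_d(n)`: the probability that a random `d`-dimensional partial order on `[n]`
(the intersection of `d` independent uniform linear orders) is an antichain. -/
def Qd (d n : ℕ) : ℝ :=
  (Nat.card {σ : Fin d → Equiv.Perm (Fin n) //
      ∀ a b : Fin n, (∀ i, σ i a < σ i b) → False} : ℝ) / (n.factorial : ℝ) ^ d

private def pairEquiv (m n : ℕ) :
    (Σ τ : Fin (m + 1) → Equiv.Perm (Fin n),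
      {ρ : Equiv.Perm (Fin n) //
        ∀ a b : Fin n, (∀ i, τ i a < τ i b) → ρ a < ρ b}) ≃
    {σ : Fin (m + 2) → Equiv.Perm (Fin n) //
      ∀ a b : Fin n, (∀ i, σ i a < σ i b) → False} where
  toFun x := ⟨Fin.snoc x.1 (x.2.1.trans Fin.revPerm), by
    rintro a b hab
    have h1 : ∀ i, x.1 i a < x.1 i b := fun i => by
      simpa using hab i.castSucc
    have h2 := hab (Fin.last _)
    simp only [Fin.snoc_last, Equiv.trans_apply, Fin.revPerm_apply, Fin.rev_lt_rev] at h2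
    exact absurd (x.2.2 a b h1) (asymm h2)⟩
  invFun x := ⟨Fin.init x.1, ⟨(x.1 (Fin.last _)).trans Fin.revPerm, by
    rintro a b hab
    simp only [Fin.init] at hab
    simp only [Equiv.trans_apply, Fin.revPerm_apply, Fin.rev_lt_rev]
    by_contra hc
    have hab' : a ≠ b := by
      rintro rfl; exact lt_irrefl _ (hab 0)
    have hne : x.1 (Fin.last _) a ≠ x.1 (Fin.last _) b :=
      fun h => hab' ((x.1 (Fin.last _)).injective h)
    have hlast : x.1 (Fin.last _) a < x.1 (Fin.last _) b :=
      lt_of_le_of_ne (not_lt.mp hc) hne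
    refine x.2 a b fun i => ?_
    refine Fin.lastCases hlast (fun j => hab j) i⟩⟩
  left_inv x := by
    refine Sigma.ext (by simp) ?_
    refine (Subtype.heq_iff_coe_eq ?_).mpr ?_
    · intro ρ
      simp
    · simp only [Fin.snoc_last]
      ext a
      simp
  right_inv x := by
    refine Subtype.ext ?_
    refine funext fun i => ?_
    refine Fin.lastCases ?_ (fun j => ?_) i
    · simp only [Fin.snoc_last]
      ext a
      simp [Fin.init]
    · simp [Fin.init]

private lemma card_sum (m n : ℕ) :
    (∑ τ : Fin (m + 1) → Equiv.Perm (Fin n),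
        (Nat.card {ρ : Equiv.Perm (Fin n) //
          ∀ a b : Fin n, (∀ i, τ i a < τ i b) → ρ a < ρ b})) =
    Nat.card {σ : Fin (m + 2) → Equiv.Perm (Fin n) //
      ∀ a b : Fin n, (∀ i, σ i a < σ i b) → False} := by
  classical
  rw [← Nat.card_congr (pairEquiv m n)]
  rw [Nat.card_eq_fintype_card, Fintype.card_sigma]
  exact Finset.sum_congr rfl fun τ _ => by rw [Nat.card_eq_fintype_card]

/-- The expected number of linear extensions of a random `(d-1)`-dimensional partial
order on `[n]` equals `n! · Q_d(n)`. -/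
theorem stmt12 (d n : ℕ) (hd : 2 ≤ d) (hn : 1 ≤ n) :
    (∑ τ : Fin (d - 1) → Equiv.Perm (Fin n),
        (Nat.card {ρ : Equiv.Perm (Fin n) //
          ∀ a b : Fin n, (∀ i, τ i a < τ i b) → ρ a < ρ b} : ℝ)) /
      (n.factorial : ℝ) ^ (d - 1)
    = (n.factorial : ℝ) * Qd d n := by
  obtain ⟨m, rfl⟩ : ∃ m, d = m + 2 := ⟨d - 2, by omega⟩
  have hm : m + 2 - 1 = m + 1 := rfl
  rw [Qd]
  have hcast : (∑ τ : Fin (m + 2 - 1) → Equiv.Perm (Fin n),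
        (Nat.card {ρ : Equiv.Perm (Fin n) //
          ∀ a b : Fin n, (∀ i, τ i a < τ i b) → ρ a < ρ b} : ℝ))
      = ((Nat.card {σ : Fin (m + 2) → Equiv.Perm (Fin n) //
          ∀ a b : Fin n, (∀ i, σ i a < σ i b) → False} : ℕ) : ℝ) := by
    rw [← card_sum m n]
    push_cast
    rfl
  rw [hcast, hm]
  have hfac : (n.factorial : ℝ) ≠ 0 := Nat.cast_ne_zero.mpr n.factorial_ne_zero
  field_simp
  ring
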